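/- The operator family R_{z,Π,Θ} := R_z + G_z Π Γ_{z,Π,Θ}⁻¹ Π G_{z̄}* is the resolvent of a self-adjoint extension A_{Π,Θ} of S, whose domain is {φ ∈ D(S*) : ζ_φ ∈ D(Θ), Π τ φ₀ = Θ ζ_φ} and on which A_{Π,Θ}φ = A₀φ₀. -/

import Mathlib

/- Abstract Krein framework (Posilicano): the self-adjoint operator A₀ on the
Hilbert space H is modeled by its domain `D`, its action `A`, its resolvent set
`ρA` and its resolvent family `R z = (-A₀+z)⁻¹`; `τ : 𝒟(A₀) → h` is bounded
w.r.t. the graph norm; `G z = (τ R_z̄)*` is characterized by the adjoint identity. -/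

local notation "⟪" x ", " y "⟫" => @inner ℂ _ _ x y

/-- The Krein resolvent `R_{z,Pr,Θ} := R_z + G_z Pr Γ_{z,Pr,Θ}⁻¹ Pr G_{z̄}*`, where
`B z` denotes the (bounded) inverse `Γ_{z,Pr,Θ}⁻¹`. -/
noncomputable def kreinResolvent {H h : Type*}
    [NormedAddCommGroup H] [InnerProductSpace ℂ H] [CompleteSpace H]
    [NormedAddCommGroup h] [InnerProductSpace ℂ h] [CompleteSpace h]
    (R : ℂ → H →L[ℂ] H) (G : ℂ → h →L[ℂ] H) (Pr : h →L[ℂ] h)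
    (B : ℂ → h →L[ℂ] h) (z : ℂ) : H →L[ℂ] H :=
  R z + (G z).comp ((Pr.comp ((B z).comp (Pr.comp
    (ContinuousLinearMap.adjoint (G ((starRingEnd ℂ) z)))))))

/-- The graph of the extension `A_{Pr,Θ}`: `A_{Pr,Θ} φ = η` iff `φ = φ₀ + G₀ζ`
with `ζ ∈ 𝒟(Θ)`, `Pr τ φ₀ = Θ ζ` and `η = A₀ φ₀`. -/
def extGraph {H h : Type*}
    [NormedAddCommGroup H] [InnerProductSpace ℂ H]
    [NormedAddCommGroup h] [InnerProductSpace ℂ h]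
    (D : Submodule ℂ H) (A : D →ₗ[ℂ] H) (τ : D →ₗ[ℂ] h) (G0 : h →L[ℂ] H)
    (Pr : h →L[ℂ] h) (DΘ : Submodule ℂ h) (Θ : DΘ →ₗ[ℂ] h) (φ η : H) : Prop :=
  ∃ (φ₀ : D) (ζ : h) (hζ : ζ ∈ DΘ),
    φ = (φ₀ : H) + G0 ζ ∧ Pr (τ φ₀) = Θ ⟨ζ, hζ⟩ ∧ η = A φ₀

/-- `R_{z,Pr,Θ}` is the resolvent of the self-adjoint extension
`A_{Pr,Θ}` of `S` with domain `{φ ∈ 𝒟(S*) : ζ_φ ∈ 𝒟(Θ), Pr τ φ₀ = Θ ζ_φ}` and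
action `A_{Pr,Θ} φ = A₀ φ₀`: it extends `S`, it is symmetric, its graph is
self-adjoint, and `R_{z,Pr,Θ}` inverts `-A_{Pr,Θ} + z` for `z ∈ Z_{Pr,Θ}`. -/
theorem krein_selfadjoint_extension
    {H h : Type*}
    [NormedAddCommGroup H] [InnerProductSpace ℂ H] [CompleteSpace H]
    [NormedAddCommGroup h] [InnerProductSpace ℂ h] [CompleteSpace h]
    (D : Submodule ℂ H) (hDdense : Dense (D : Set H))
    (A : D →ₗ[ℂ] H)
    (hsym : ∀ x y : D, ⟪A x, (y : H)⟫ = ⟪(x : H), A y⟫)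
    (ρA : Set ℂ)
    (hρconj : ∀ z ∈ ρA, (starRingEnd ℂ) z ∈ ρA)
    (R : ℂ → H →L[ℂ] H)
    (hmem : ∀ z, z ∈ ρA → ∀ y : H, R z y ∈ D)
    (hres1 : ∀ z (hz : z ∈ ρA) (y : H), z • R z y - A ⟨R z y, hmem z hz y⟩ = y)
    (hres2 : ∀ z ∈ ρA, ∀ x : D, R z (z • (x : H) - A x) = (x : H))
    (hRadj : ∀ z ∈ ρA, ContinuousLinearMap.adjoint (R z) = R ((starRingEnd ℂ) z))
    (τ : D →ₗ[ℂ] h) (C : ℝ)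
    (hτ : ∀ x : D, ‖τ x‖ ≤ C * (‖(x : H)‖ + ‖A x‖))
    (G : ℂ → h →L[ℂ] H)
    (hG : ∀ z (hz : z ∈ ρA) (ζ : h) (y : H),
      ⟪G z ζ, y⟫ = ⟪ζ, τ ⟨R ((starRingEnd ℂ) z) y, hmem _ (hρconj z hz) y⟩⟫)
    (hτsurj : Function.Surjective τ)
    (hker : Dense ((fun x : D => (x : H)) '' {x : D | τ x = 0}))
    (h0 : (0 : ℂ) ∈ ρA)
    (hsub : ∀ z (hz : z ∈ ρA) (ζ : h), G 0 ζ - G z ζ ∈ D)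
    (Γ : ℂ → h →L[ℂ] h)
    (hΓ : ∀ z (hz : z ∈ ρA) (ζ : h), Γ z ζ = τ ⟨G 0 ζ - G z ζ, hsub z hz ζ⟩)
    (Pr : h →L[ℂ] h) (hPrproj : Pr.comp Pr = Pr) (hPrsa : IsSelfAdjoint Pr)
    (DΘ : Submodule ℂ h) (hDΘ : (DΘ : Set h) ⊆ Set.range ⇑Pr)
    (hDΘdense : Set.range ⇑Pr ⊆ closure (DΘ : Set h))
    (Θ : DΘ →ₗ[ℂ] h)
    (hΘran : ∀ x : DΘ, Θ x ∈ Set.range ⇑Pr)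
    (hΘsym : ∀ x y : DΘ, ⟪Θ x, (y : h)⟫ = ⟪(x : h), Θ y⟫)
    (hΘsa : ∀ ζ η : h, ζ ∈ Set.range ⇑Pr → η ∈ Set.range ⇑Pr →
      (∀ x : DΘ, ⟪ζ, Θ x⟫ = ⟪η, (x : h)⟫) → ζ ∈ DΘ)
    (Z : Set ℂ) (hZρ : Z ⊆ ρA) (hZconj : ∀ z ∈ Z, (starRingEnd ℂ) z ∈ Z)
    (B : ℂ → h →L[ℂ] h)
    (hBmem : ∀ z (hz : z ∈ Z) (ζ : h), B z ζ ∈ DΘ)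
    (hB1 : ∀ z (hz : z ∈ Z), ∀ ζ ∈ Set.range ⇑Pr,
      Θ ⟨B z ζ, hBmem z hz ζ⟩ + Pr (Γ z (Pr (B z ζ))) = ζ)
    (hB2 : ∀ z ∈ Z, ∀ x : DΘ, B z (Θ x + Pr (Γ z (Pr (x : h)))) = (x : h))
    (hBPr : ∀ z ∈ Z, B z = Pr.comp ((B z).comp Pr))
 :
    (∀ x : D, τ x = 0 → extGraph D A τ (G 0) Pr DΘ Θ (x : H) (A x)) ∧
    (∀ φ η φ' η' : H, extGraph D A τ (G 0) Pr DΘ Θ φ η →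
      extGraph D A τ (G 0) Pr DΘ Θ φ' η' → ⟪η, φ'⟫ = ⟪φ, η'⟫) ∧
    (∀ φ η : H,
      (∀ ψ ξ : H, extGraph D A τ (G 0) Pr DΘ Θ ψ ξ → ⟪η, ψ⟫ = ⟪φ, ξ⟫) →
      extGraph D A τ (G 0) Pr DΘ Θ φ η) ∧
    (∀ z (hz : z ∈ Z) (y : H), ∃ η : H,
      extGraph D A τ (G 0) Pr DΘ Θ (kreinResolvent R G Pr B z y) η ∧
        z • kreinResolvent R G Pr B z y - η = y) ∧
    (∀ z ∈ Z, ∀ φ η : H, extGraph D A τ (G 0) Pr DΘ Θ φ η →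
      kreinResolvent R G Pr B z (z • φ - η) = φ) := by
  
  have hcc : ∀ w : ℂ, (starRingEnd ℂ) ((starRingEnd ℂ) w) = w := fun w => Complex.conj_conj w
  have hc0 : (starRingEnd ℂ) (0:ℂ) = 0 := map_zero _
  have hAR0 : ∀ y : H, A ⟨R 0 y, hmem 0 h0 y⟩ = -y := by
    intro y
    have h := hres1 0 h0 y
    rw [zero_smul, zero_sub] at h
    rw [← neg_neg (A _), h]
  have hR0A : ∀ x : D, R 0 (A x) = -(x : H) := by
    intro x
    have h := hres2 0 h0 x
    rw [zero_smul, zero_sub, map_neg] at h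
    rw [← neg_neg (R 0 (A x)), h]
  have hRmove : ∀ a (ha : a ∈ ρA) (u v : H), ⟪u, R a v⟫ = ⟪R ((starRingEnd ℂ) a) u, v⟫ := by
    intro a ha u v
    rw [← hRadj a ha]
    exact (ContinuousLinearMap.adjoint_inner_left (R a) v u).symm
  have hGc : ∀ z (hz : z ∈ ρA) (ζ : h) (y : H),
      ⟪G ((starRingEnd ℂ) z) ζ, y⟫ = ⟪ζ, τ ⟨R z y, hmem z hz y⟩⟫ := by
    intro z hz ζ y
    rw [hG ((starRingEnd ℂ) z) (hρconj z hz) ζ y]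
    have e : (⟨R ((starRingEnd ℂ) ((starRingEnd ℂ) z)) y,
        hmem _ (hρconj _ (hρconj z hz)) y⟩ : D) = ⟨R z y, hmem z hz y⟩ := by
      apply Subtype.ext
      show R ((starRingEnd ℂ) ((starRingEnd ℂ) z)) y = R z y
      rw [hcc]
    rw [e]
  have hG0 : ∀ (ζ : h) (y : H), ⟪G 0 ζ, y⟫ = ⟪ζ, τ ⟨R 0 y, hmem 0 h0 y⟩⟫ := by
    intro ζ y
    have := hGc 0 h0 ζ y
    rwa [hc0] at this
  have hAG0 : ∀ (ζ : h) (x : D), ⟪G 0 ζ, (A x : H)⟫ = -⟪ζ, τ x⟫ := by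
    intro ζ x
    rw [hG0 ζ (A x)]
    have e : (⟨R 0 (A x), hmem 0 h0 (A x)⟩ : D) = -x := Subtype.ext (by simpa using hR0A x)
    rw [e, map_neg, inner_neg_right]
  have hAG0' : ∀ (κ0 : h) (x : D), ⟪(A x : H), G 0 κ0⟫ = -⟪τ x, κ0⟫ := by
    intro κ0 x
    calc ⟪(A x : H), G 0 κ0⟫
        = (starRingEnd ℂ) ⟪G 0 κ0, (A x : H)⟫ := (inner_conj_symm _ _).symm
      _ = (starRingEnd ℂ) (-⟪κ0, τ x⟫) := by rw [hAG0]
      _ = -⟪τ x, κ0⟫ := by rw [map_neg, inner_conj_symm]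
  have hresdiff : ∀ a (ha : a ∈ ρA) b (hb : b ∈ ρA) (y : H),
      R a y - R b y = (b - a) • R a (R b y) := by
    intro a ha b hb y
    have h := hres1 b hb y
    rw [sub_eq_iff_eq_add] at h
    have hAx : A ⟨R b y, hmem b hb y⟩ = b • R b y - y := by
      rw [h]; abel
    have h2 := hres2 a ha ⟨R b y, hmem b hb y⟩
    rw [hAx] at h2
    simp only [Submodule.coe_mk] at h2
    have e : a • R b y - (b • R b y - y) = (a - b) • R b y + y := by module
    rw [e, map_add, map_smul] at h2
    have h3 : (a - b) • R a (R b y) = R b y - R a y := eq_sub_of_add_eq h2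
    calc R a y - R b y = -((a - b) • R a (R b y)) := by rw [h3]; abel
      _ = (b - a) • R a (R b y) := by rw [← neg_smul, neg_sub]
  have hGdiff1 : ∀ z (hz : z ∈ ρA) (ζ : h), G 0 ζ - G z ζ = z • R 0 (G z ζ) := by
    intro z hz ζ
    apply ext_inner_right ℂ
    intro y
    have hd : R 0 y - R ((starRingEnd ℂ) z) y =
        (starRingEnd ℂ) z • R ((starRingEnd ℂ) z) (R 0 y) := by
      have h := hresdiff ((starRingEnd ℂ) z) (hρconj z hz) 0 h0 y
      rw [zero_sub] at h
      rw [← neg_neg (R 0 y - R ((starRingEnd ℂ) z) y), neg_sub, h]; module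
    have e : (⟨R 0 y, hmem 0 h0 y⟩ : D) - ⟨R ((starRingEnd ℂ) z) y, hmem _ (hρconj z hz) y⟩ =
        (starRingEnd ℂ) z • ⟨R ((starRingEnd ℂ) z) (R 0 y), hmem _ (hρconj z hz) (R 0 y)⟩ :=
      Subtype.ext (by simpa using hd)
    calc ⟪G 0 ζ - G z ζ, y⟫
        = ⟪ζ, τ ⟨R 0 y, hmem 0 h0 y⟩⟫
            - ⟪ζ, τ ⟨R ((starRingEnd ℂ) z) y, hmem _ (hρconj z hz) y⟩⟫ := by
          rw [inner_sub_left, hG0, hG z hz]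
      _ = ⟪ζ, τ ((⟨R 0 y, hmem 0 h0 y⟩ : D)
            - ⟨R ((starRingEnd ℂ) z) y, hmem _ (hρconj z hz) y⟩)⟫ := by
          rw [map_sub, inner_sub_right]
      _ = (starRingEnd ℂ) z *
            ⟪ζ, τ ⟨R ((starRingEnd ℂ) z) (R 0 y), hmem _ (hρconj z hz) (R 0 y)⟩⟫ := by
          rw [e, map_smul, inner_smul_right]
      _ = (starRingEnd ℂ) z * ⟪G z ζ, R 0 y⟫ := by rw [← hG z hz ζ (R 0 y)]
      _ = (starRingEnd ℂ) z * ⟪R ((starRingEnd ℂ) 0) (G z ζ), y⟫ := by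
          rw [hRmove 0 h0]
      _ = ⟪z • R 0 (G z ζ), y⟫ := by rw [hc0, inner_smul_left]
  have hGdiff2 : ∀ z (hz : z ∈ ρA) (ζ : h), G 0 ζ - G z ζ = z • R z (G 0 ζ) := by
    intro z hz ζ
    apply ext_inner_right ℂ
    intro y
    have hd : R 0 y - R ((starRingEnd ℂ) z) y =
        (starRingEnd ℂ) z • R 0 (R ((starRingEnd ℂ) z) y) := by
      have h := hresdiff 0 h0 ((starRingEnd ℂ) z) (hρconj z hz) y
      rw [sub_zero] at h
      exact h
    have e : (⟨R 0 y, hmem 0 h0 y⟩ : D) - ⟨R ((starRingEnd ℂ) z) y, hmem _ (hρconj z hz) y⟩ =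
        (starRingEnd ℂ) z • ⟨R 0 (R ((starRingEnd ℂ) z) y), hmem 0 h0 _⟩ :=
      Subtype.ext (by simpa using hd)
    calc ⟪G 0 ζ - G z ζ, y⟫
        = ⟪ζ, τ ⟨R 0 y, hmem 0 h0 y⟩⟫
            - ⟪ζ, τ ⟨R ((starRingEnd ℂ) z) y, hmem _ (hρconj z hz) y⟩⟫ := by
          rw [inner_sub_left, hG0, hG z hz]
      _ = ⟪ζ, τ ((⟨R 0 y, hmem 0 h0 y⟩ : D)
            - ⟨R ((starRingEnd ℂ) z) y, hmem _ (hρconj z hz) y⟩)⟫ := by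
          rw [map_sub, inner_sub_right]
      _ = (starRingEnd ℂ) z *
            ⟪ζ, τ ⟨R 0 (R ((starRingEnd ℂ) z) y), hmem 0 h0 _⟩⟫ := by
          rw [e, map_smul, inner_smul_right]
      _ = (starRingEnd ℂ) z * ⟪G 0 ζ, R ((starRingEnd ℂ) z) y⟫ := by
          rw [← hG0 ζ (R ((starRingEnd ℂ) z) y)]
      _ = (starRingEnd ℂ) z *
            ⟪R ((starRingEnd ℂ) ((starRingEnd ℂ) z)) (G 0 ζ), y⟫ := by
          rw [hRmove ((starRingEnd ℂ) z) (hρconj z hz)]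
      _ = ⟪z • R z (G 0 ζ), y⟫ := by rw [hcc, inner_smul_left]
  have hAdiff : ∀ z (hz : z ∈ ρA) (ζ : h),
      A ⟨G 0 ζ - G z ζ, hsub z hz ζ⟩ = -(z • G z ζ) := by
    intro z hz ζ
    have e : (⟨G 0 ζ - G z ζ, hsub z hz ζ⟩ : D) = ⟨R 0 (z • G z ζ), hmem 0 h0 _⟩ :=
      Subtype.ext (by
        show G 0 ζ - G z ζ = R 0 (z • G z ζ)
        rw [hGdiff1 z hz ζ, map_smul])
    rw [e, hAR0]
  have hadjG : ∀ z (hz : z ∈ ρA) (y : H),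
      ContinuousLinearMap.adjoint (G ((starRingEnd ℂ) z)) y = τ ⟨R z y, hmem z hz y⟩ := by
    intro z hz y
    apply ext_inner_left ℂ
    intro ζ
    rw [ContinuousLinearMap.adjoint_inner_right]
    exact hGc z hz ζ y
  -- projection facts
  have hPr1 : ∀ w : h, Pr (Pr w) = Pr w := by
    intro w
    have h : (Pr.comp Pr) w = Pr w := by rw [hPrproj]
    simpa using h
  have hPrfix : ∀ w ∈ Set.range ⇑Pr, Pr w = w := by
    rintro w ⟨v, rfl⟩
    exact hPr1 v
  have hPradj : ContinuousLinearMap.adjoint Pr = Pr := by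
    rw [← ContinuousLinearMap.star_eq_adjoint]
    exact hPrsa
  have hPrsa' : ∀ u v : h, ⟪Pr u, v⟫ = ⟪u, Pr v⟫ := by
    intro u v
    conv_lhs => rw [← hPradj]
    exact ContinuousLinearMap.adjoint_inner_left Pr v u
  have hkergraph : ∀ x : D, τ x = 0 → extGraph D A τ (G 0) Pr DΘ Θ (x : H) (A x) := by
    intro x hx
    refine ⟨x, 0, DΘ.zero_mem, by simp, ?_, rfl⟩
    rw [hx, map_zero]
    exact (map_zero Θ).symm
  refine ⟨hkergraph, ?_, ?_, ?_, ?_⟩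
  -- PART 2 : symmetry
  · rintro φ η φ' η' ⟨φ₀, ζ, hζ, rfl, hbc, rfl⟩ ⟨φ₀', ζ', hζ', rfl, hbc', rfl⟩
    rw [inner_add_right, inner_add_left]
    have e1 : ⟪(A φ₀ : H), G 0 ζ'⟫ = -⟪τ φ₀, ζ'⟫ := hAG0' ζ' φ₀
    have e2 : ⟪G 0 ζ, (A φ₀' : H)⟫ = -⟪ζ, τ φ₀'⟫ := hAG0 ζ φ₀'
    have e3 : ⟪τ φ₀, ζ'⟫ = ⟪ζ, τ φ₀'⟫ := by
      calc ⟪τ φ₀, ζ'⟫ = ⟪τ φ₀, Pr ζ'⟫ := by rw [hPrfix ζ' (hDΘ hζ')]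
        _ = ⟪Pr (τ φ₀), ζ'⟫ := (hPrsa' _ _).symm
        _ = ⟪(Θ ⟨ζ, hζ⟩ : h), ζ'⟫ := by rw [hbc]
        _ = ⟪ζ, (Θ ⟨ζ', hζ'⟩ : h)⟫ := hΘsym ⟨ζ, hζ⟩ ⟨ζ', hζ'⟩
        _ = ⟪ζ, Pr (τ φ₀')⟫ := by rw [hbc']
        _ = ⟪Pr ζ, τ φ₀'⟫ := (hPrsa' _ _).symm
        _ = ⟪ζ, τ φ₀'⟫ := by rw [hPrfix ζ (hDΘ hζ)]
    rw [hsym φ₀ φ₀', e1, e2, e3]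
  -- PART 3 : self-adjointness of the graph
  · intro φ η hadj
    have hφ₀mem : -(R 0 η) ∈ D := D.neg_mem (hmem 0 h0 η)
    have hAφ₀ : A ⟨-(R 0 η), hφ₀mem⟩ = η := by
      have e : (⟨-(R 0 η), hφ₀mem⟩ : D) = -⟨R 0 η, hmem 0 h0 η⟩ := Subtype.ext rfl
      rw [e, map_neg, hAR0, neg_neg]
    have hker' : ∀ x : D, τ x = 0 → ⟪φ + R 0 η, (A x : H)⟫ = 0 := by
      intro x hx
      have h1 := hadj (x : H) (A x) (hkergraph x hx)
      have h2 : ⟪R 0 η, (A x : H)⟫ = -⟪η, (x : H)⟫ := by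
        have h3 := (hsym ⟨R 0 η, hmem 0 h0 η⟩ x).symm
        rw [hAR0 η, inner_neg_left] at h3
        exact h3
      rw [inner_add_left, h2, ← h1]
      ring
    -- the bounded operator T = τ ∘ R0
    let T : H →L[ℂ] h := LinearMap.mkContinuous
      { toFun := fun y0 => τ ⟨R 0 y0, hmem 0 h0 y0⟩
        map_add' := fun y1 y2 => by
          have e : (⟨R 0 (y1 + y2), hmem 0 h0 (y1 + y2)⟩ : D)
              = ⟨R 0 y1, hmem 0 h0 y1⟩ + ⟨R 0 y2, hmem 0 h0 y2⟩ :=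
            Subtype.ext (by simp)
          show τ ⟨R 0 (y1 + y2), hmem 0 h0 (y1 + y2)⟩
              = τ ⟨R 0 y1, hmem 0 h0 y1⟩ + τ ⟨R 0 y2, hmem 0 h0 y2⟩
          rw [e, map_add]
        map_smul' := fun c0 y0 => by
          have e : (⟨R 0 (c0 • y0), hmem 0 h0 (c0 • y0)⟩ : D)
              = c0 • ⟨R 0 y0, hmem 0 h0 y0⟩ :=
            Subtype.ext (by simp)
          show τ ⟨R 0 (c0 • y0), hmem 0 h0 (c0 • y0)⟩
              = (RingHom.id ℂ) c0 • τ ⟨R 0 y0, hmem 0 h0 y0⟩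
          rw [e, map_smul, RingHom.id_apply] }
      (|C| * (‖R 0‖ + 1)) (fun y0 => by
        have h1 := hτ ⟨R 0 y0, hmem 0 h0 y0⟩
        rw [hAR0 y0] at h1
        simp only [Submodule.coe_mk, norm_neg] at h1
        refine le_trans h1 ?_
        have h2 : ‖R 0 y0‖ ≤ ‖R 0‖ * ‖y0‖ := (R 0).le_opNorm y0
        have h3 : C ≤ |C| := le_abs_self C
        have h4 : (0:ℝ) ≤ |C| := abs_nonneg C
        have h5 : (0:ℝ) ≤ ‖y0‖ := norm_nonneg _
        have h6 : (0:ℝ) ≤ ‖R 0 y0‖ := norm_nonneg _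
        nlinarith)
    have hTval : ∀ y0 : H, T y0 = τ ⟨R 0 y0, hmem 0 h0 y0⟩ := fun _ => rfl
    have hG0T : ∀ (ζ0 : h) (y0 : H), ⟪G 0 ζ0, y0⟫ = ⟪ζ0, T y0⟫ := fun ζ0 y0 => by
      rw [hTval]; exact hG0 ζ0 y0
    have hTsurj : Function.Surjective T := by
      intro w
      obtain ⟨x, hx⟩ := hτsurj w
      refine ⟨-(A x), ?_⟩
      rw [hTval]
      have e : (⟨R 0 (-(A x)), hmem 0 h0 _⟩ : D) = x :=
        Subtype.ext (by
          show R 0 (-(A x)) = (x : H)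
          rw [map_neg, hR0A, neg_neg])
      rw [e, hx]
    obtain ⟨c, hc0', hcp⟩ := ContinuousLinearMap.exists_preimage_norm_le T hTsurj
    have hlow : ∀ ζ0 : h, ‖ζ0‖ ≤ c * ‖G 0 ζ0‖ := by
      intro ζ0
      obtain ⟨x, hx, hxn⟩ := hcp ζ0
      have h1 : ⟪ζ0, ζ0⟫ = ⟪G 0 ζ0, x⟫ := by rw [hG0T ζ0 x, hx]
      have h3 : ‖(⟪ζ0, ζ0⟫ : ℂ)‖ = ‖ζ0‖ ^ 2 := by
        rw [inner_self_eq_norm_sq_to_K]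
        simp [norm_pow]
      have h2 : ‖ζ0‖ ^ 2 ≤ ‖G 0 ζ0‖ * (c * ‖ζ0‖) := by
        calc ‖ζ0‖ ^ 2 = ‖(⟪ζ0, ζ0⟫ : ℂ)‖ := h3.symm
          _ = ‖(⟪G 0 ζ0, x⟫ : ℂ)‖ := by rw [h1]
          _ ≤ ‖G 0 ζ0‖ * ‖x‖ := norm_inner_le_norm _ _
          _ ≤ ‖G 0 ζ0‖ * (c * ‖ζ0‖) := mul_le_mul_of_nonneg_left hxn (norm_nonneg _)
      rcases eq_or_lt_of_le (norm_nonneg ζ0) with h4 | h4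
      · rw [← h4]
        positivity
      · nlinarith
    have hclosed : IsClosed (Set.range ⇑(G 0)) := by
      have hanti : AntilipschitzWith (Real.toNNReal c) ⇑(G 0) :=
        ContinuousLinearMap.antilipschitz_of_bound (G 0) (fun ζ0 => by
          rw [Real.coe_toNNReal c hc0'.le]
          exact hlow ζ0)
      exact hanti.isClosed_range (G 0).uniformContinuous
    have hKc2 : (LinearMap.range (G 0 : h →ₗ[ℂ] H)).topologicalClosure = LinearMap.range (G 0 : h →ₗ[ℂ] H) :=
      IsClosed.submodule_topologicalClosure_eq (by rw [LinearMap.coe_range]; exact hclosed)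
    have hψmem : ∃ ζ0 : h, G 0 ζ0 = φ + R 0 η := by
      have hOO : (φ + R 0 η) ∈ (LinearMap.range (G 0 : h →ₗ[ℂ] H))ᗮᗮ := by
        rw [Submodule.mem_orthogonal]
        intro u hu
        have hTu : T u = 0 := by
          apply ext_inner_left ℂ
          intro ζ0
          rw [inner_zero_right, ← hG0T ζ0 u]
          exact (Submodule.mem_orthogonal _ u).mp hu (G 0 ζ0) (LinearMap.mem_range_self _ ζ0)
        have hτu : τ ⟨R 0 u, hmem 0 h0 u⟩ = 0 := by rw [← hTval u]; exact hTu
        have h5 := hker' ⟨R 0 u, hmem 0 h0 u⟩ hτu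
        rw [hAR0 u, inner_neg_right] at h5
        have h6 : ⟪φ + R 0 η, u⟫ = 0 := by rwa [neg_eq_zero] at h5
        calc ⟪u, φ + R 0 η⟫ = (starRingEnd ℂ) ⟪φ + R 0 η, u⟫ := (inner_conj_symm _ _).symm
          _ = 0 := by rw [h6, map_zero]
      rw [Submodule.orthogonal_orthogonal_eq_closure, hKc2] at hOO
      exact LinearMap.mem_range.mp hOO
    obtain ⟨ζ, hζval⟩ := hψmem
    have hφdecomp : φ = ((⟨-(R 0 η), hφ₀mem⟩ : D) : H) + G 0 ζ := by
      rw [hζval]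
      show φ = -(R 0 η) + (φ + R 0 η)
      abel
    have hker0 : ∀ w : h, Pr w = 0 → ⟪ζ, w⟫ = 0 := by
      intro w hw
      obtain ⟨ψ₀, hψ₀⟩ := hτsurj w
      have hg : extGraph D A τ (G 0) Pr DΘ Θ (ψ₀ : H) (A ψ₀) := by
        refine ⟨ψ₀, 0, DΘ.zero_mem, by simp, ?_, rfl⟩
        rw [hψ₀, hw]
        exact (map_zero Θ).symm
      have h1 := hadj (ψ₀ : H) (A ψ₀) hg
      have e7 : ⟪((⟨-(R 0 η), hφ₀mem⟩ : D) : H), (A ψ₀ : H)⟫ = ⟪η, (ψ₀ : H)⟫ := by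
        rw [← hsym ⟨-(R 0 η), hφ₀mem⟩ ψ₀, hAφ₀]
      rw [hφdecomp, inner_add_left, hAG0 ζ ψ₀, hψ₀, e7] at h1
      linear_combination h1
    have hbΘ : ∀ κ : DΘ, ⟪ζ, (Θ κ : h)⟫ = ⟪τ ⟨-(R 0 η), hφ₀mem⟩, (κ : h)⟫ := by
      intro κ
      obtain ⟨ψ₀, hψ₀⟩ := hτsurj (Θ κ)
      have hg : extGraph D A τ (G 0) Pr DΘ Θ ((ψ₀ : H) + G 0 (κ : h)) (A ψ₀) := by
        refine ⟨ψ₀, (κ : h), κ.2, rfl, ?_, rfl⟩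
        rw [hψ₀]
        exact hPrfix _ (hΘran κ)
      have h1 := hadj ((ψ₀ : H) + G 0 (κ : h)) (A ψ₀) hg
      have e5 : ⟪η, G 0 (κ : h)⟫ = -⟪τ ⟨-(R 0 η), hφ₀mem⟩, (κ : h)⟫ := by
        conv_lhs => rw [← hAφ₀]
        exact hAG0' (κ : h) ⟨-(R 0 η), hφ₀mem⟩
      have e7 : ⟪((⟨-(R 0 η), hφ₀mem⟩ : D) : H), (A ψ₀ : H)⟫ = ⟪η, (ψ₀ : H)⟫ := by
        rw [← hsym ⟨-(R 0 η), hφ₀mem⟩ ψ₀, hAφ₀]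
      rw [inner_add_right, hφdecomp, inner_add_left, hAG0 ζ ψ₀, hψ₀, e5, e7] at h1
      linear_combination h1
    have hζPr : Pr ζ = ζ := by
      have hw : Pr (ζ - Pr ζ) = 0 := by rw [map_sub, hPr1, sub_self]
      have h1 := hker0 (ζ - Pr ζ) hw
      have h2 : ⟪Pr ζ, ζ - Pr ζ⟫ = 0 := by rw [hPrsa', hw, inner_zero_right]
      have h3 : ⟪ζ - Pr ζ, ζ - Pr ζ⟫ = 0 := by rw [inner_sub_left, h1, h2, sub_zero]
      have h4 := inner_self_eq_zero.mp h3
      rw [sub_eq_zero] at h4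
      exact h4.symm
    have hζDΘ : ζ ∈ DΘ := by
      refine hΘsa ζ (Pr (τ ⟨-(R 0 η), hφ₀mem⟩)) ⟨ζ, hζPr⟩ ⟨_, rfl⟩ ?_
      intro x
      rw [hbΘ x]
      calc ⟪τ ⟨-(R 0 η), hφ₀mem⟩, (x : h)⟫
          = ⟪τ ⟨-(R 0 η), hφ₀mem⟩, Pr (x : h)⟫ := by rw [hPrfix _ (hDΘ x.2)]
        _ = ⟪Pr (τ ⟨-(R 0 η), hφ₀mem⟩), (x : h)⟫ := (hPrsa' _ _).symm
    have hbcfin : Pr (τ ⟨-(R 0 η), hφ₀mem⟩) = Θ ⟨ζ, hζDΘ⟩ := by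
      have hd0 : ∀ x : DΘ, ⟪(Θ ⟨ζ, hζDΘ⟩ : h) - Pr (τ ⟨-(R 0 η), hφ₀mem⟩), (x : h)⟫ = 0 := by
        intro x
        rw [inner_sub_left]
        have e1 : ⟪(Θ ⟨ζ, hζDΘ⟩ : h), (x : h)⟫ = ⟪ζ, (Θ x : h)⟫ := hΘsym ⟨ζ, hζDΘ⟩ x
        have e2 : ⟪Pr (τ ⟨-(R 0 η), hφ₀mem⟩), (x : h)⟫ = ⟪ζ, (Θ x : h)⟫ := by
          rw [hPrsa', hPrfix _ (hDΘ x.2), ← hbΘ x]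
        rw [e1, e2, sub_self]
      obtain ⟨w1, hw1⟩ := hΘran ⟨ζ, hζDΘ⟩
      have hdPr : (Θ ⟨ζ, hζDΘ⟩ : h) - Pr (τ ⟨-(R 0 η), hφ₀mem⟩) ∈ Set.range ⇑Pr :=
        ⟨w1 - τ ⟨-(R 0 η), hφ₀mem⟩, by rw [map_sub, hw1]⟩
      have hdc := hDΘdense hdPr
      have hsub2 : (DΘ : Set h)
          ⊆ {x : h | ⟪(Θ ⟨ζ, hζDΘ⟩ : h) - Pr (τ ⟨-(R 0 η), hφ₀mem⟩), x⟫ = 0} :=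
        fun x hx => hd0 ⟨x, hx⟩
      have hcl : IsClosed {x : h | ⟪(Θ ⟨ζ, hζDΘ⟩ : h) - Pr (τ ⟨-(R 0 η), hφ₀mem⟩), x⟫ = 0} :=
        isClosed_eq (Continuous.inner continuous_const continuous_id) continuous_const
      have hdd := closure_minimal hsub2 hcl hdc
      have h9 : ⟪(Θ ⟨ζ, hζDΘ⟩ : h) - Pr (τ ⟨-(R 0 η), hφ₀mem⟩),
          (Θ ⟨ζ, hζDΘ⟩ : h) - Pr (τ ⟨-(R 0 η), hφ₀mem⟩)⟫ = 0 := hdd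
      have h10 := inner_self_eq_zero.mp h9
      rw [sub_eq_zero] at h10
      exact h10.symm
    exact ⟨⟨-(R 0 η), hφ₀mem⟩, ζ, hζDΘ, hφdecomp, hbcfin, hAφ₀.symm⟩
  -- PART 4 : right inverse
  · intro z hz y
    have hzρ := hZρ hz
    have hξ : ContinuousLinearMap.adjoint (G ((starRingEnd ℂ) z)) y
        = τ ⟨R z y, hmem z hzρ y⟩ := hadjG z hzρ y
    have hBval : ∀ w : h, B z w = Pr (B z (Pr w)) := by
      intro w
      conv_lhs => rw [hBPr z hz]
      rfl
    obtain ⟨ζt, hζt, hζmem, hζ2⟩ :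
        ∃ ζt : h, ζt = B z (Pr (ContinuousLinearMap.adjoint (G ((starRingEnd ℂ) z)) y))
          ∧ ζt ∈ DΘ ∧ Pr ζt = ζt := by
      refine ⟨_, rfl, hBmem z hz _, ?_⟩
      conv_rhs => rw [hBval]
      rw [hPr1]
    have hKval : kreinResolvent R G Pr B z y = R z y + G z ζt := by
      simp only [kreinResolvent, ContinuousLinearMap.add_apply, ContinuousLinearMap.comp_apply]
      rw [← hζt, hζ2]
    refine ⟨A (⟨R z y, hmem z hzρ y⟩ - ⟨G 0 ζt - G z ζt, hsub z hzρ ζt⟩),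
      ⟨⟨R z y, hmem z hzρ y⟩ - ⟨G 0 ζt - G z ζt, hsub z hzρ ζt⟩, ζt, hζmem, ?_, ?_, rfl⟩, ?_⟩
    · rw [hKval]
      simp only [Submodule.coe_sub, Submodule.coe_mk]
      abel
    · have h1 := hB1 z hz (Pr (ContinuousLinearMap.adjoint (G ((starRingEnd ℂ) z)) y)) ⟨_, rfl⟩
      have e0 : (⟨B z (Pr (ContinuousLinearMap.adjoint (G ((starRingEnd ℂ) z)) y)),
          hBmem z hz _⟩ : DΘ) = ⟨ζt, hζmem⟩ := Subtype.ext hζt.symm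
      rw [e0] at h1
      have e1 : Pr (B z (Pr (ContinuousLinearMap.adjoint (G ((starRingEnd ℂ) z)) y))) = ζt := by
        rw [← hζt]
        exact hζ2
      rw [e1, hξ] at h1
      have hτφ₀ : τ ((⟨R z y, hmem z hzρ y⟩ : D) - ⟨G 0 ζt - G z ζt, hsub z hzρ ζt⟩)
          = τ ⟨R z y, hmem z hzρ y⟩ - Γ z ζt := by
        rw [map_sub, ← hΓ z hzρ ζt]
      rw [hτφ₀, map_sub]
      exact (eq_sub_of_add_eq h1).symm
    · have hA1 : A (⟨R z y, hmem z hzρ y⟩ : D) = z • R z y - y := by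
        have h := hres1 z hzρ y
        rw [sub_eq_iff_eq_add] at h
        rw [h]; abel
      rw [hKval, map_sub, hA1, hAdiff z hzρ ζt]
      module
  -- PART 5 : left inverse
  · rintro z hz φ η ⟨φ₀, ζ, hζDΘ, rfl, hbc, rfl⟩
    have hzρ := hZρ hz
    have hPrζ : Pr ζ = ζ := hPrfix ζ (hDΘ hζDΘ)
    have hRzy : R z (z • ((φ₀ : H) + G 0 ζ) - A φ₀) = (φ₀ : H) + (G 0 ζ - G z ζ) := by
      have e1 : z • ((φ₀ : H) + G 0 ζ) - A φ₀ = (z • (φ₀ : H) - A φ₀) + z • G 0 ζ := by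
        module
      rw [e1, map_add, hres2 z hzρ φ₀, map_smul, ← hGdiff2 z hzρ ζ]
    have hξ2 : ContinuousLinearMap.adjoint (G ((starRingEnd ℂ) z))
        (z • ((φ₀ : H) + G 0 ζ) - A φ₀) = τ φ₀ + Γ z ζ := by
      rw [hadjG z hzρ _]
      have e : (⟨R z (z • ((φ₀ : H) + G 0 ζ) - A φ₀), hmem z hzρ _⟩ : D)
          = φ₀ + ⟨G 0 ζ - G z ζ, hsub z hzρ ζ⟩ := Subtype.ext (by simpa using hRzy)
      rw [e, map_add, ← hΓ z hzρ ζ]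
    have hPrξ : Pr (ContinuousLinearMap.adjoint (G ((starRingEnd ℂ) z))
        (z • ((φ₀ : H) + G 0 ζ) - A φ₀)) = Θ ⟨ζ, hζDΘ⟩ + Pr (Γ z (Pr ζ)) := by
      rw [hξ2, map_add, hbc, hPrζ]
    have hBξ : B z (Pr (ContinuousLinearMap.adjoint (G ((starRingEnd ℂ) z))
        (z • ((φ₀ : H) + G 0 ζ) - A φ₀))) = ζ := by
      rw [hPrξ]
      exact hB2 z hz ⟨ζ, hζDΘ⟩
    simp only [kreinResolvent, ContinuousLinearMap.add_apply, ContinuousLinearMap.comp_apply]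
    rw [hBξ, hPrζ, hRzy]
    abel
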